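/- The dual functional K of semi-discrete partial optimal transport attains its maximum on (0,∞)^N; moreover, ψ ∈ (0,∞)^N is a maximizer of K if and only if ρ(RLag_i(ψ)) = α_i for every i ∈ {1,…,N}. -/

import Mathlib

open MeasureTheory Real Filter Set

noncomputable section

/-- The (unrestricted) Laguerre cell of index `i` in `ℝ^d`. -/
def LagD {d N : ℕ} (y : Fin N → EuclideanSpace ℝ (Fin d)) (ψ : Fin N → ℝ) (i : Fin N) :
    Set (EuclideanSpace ℝ (Fin d)) :=
  {x | ∀ j, ‖x - y i‖ ^ 2 - ψ i ≤ ‖x - y j‖ ^ 2 - ψ j}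

/-- The restricted Laguerre cell of index `i`. -/
def RLagD {d N : ℕ} (y : Fin N → EuclideanSpace ℝ (Fin d)) (ψ : Fin N → ℝ) (i : Fin N) :
    Set (EuclideanSpace ℝ (Fin d)) :=
  LagD y ψ i ∩ {x | ‖x - y i‖ ^ 2 ≤ ψ i}

/-- The dual functional of semi-discrete partial optimal transport. -/
def KD {d N : ℕ} (ρ : Measure (EuclideanSpace ℝ (Fin d)))
    (y : Fin N → EuclideanSpace ℝ (Fin d)) (α : Fin N → ℝ) (ψ : Fin N → ℝ) : ℝ :=
  (∫ x, min 0 (⨅ i, (‖x - y i‖ ^ 2 - ψ i)) ∂ρ) + ∑ i, α i * ψ i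

variable {d N : ℕ}

local notation "E" => EuclideanSpace ℝ (Fin d)

/-- integrand -/
def gf (y : Fin N → EuclideanSpace ℝ (Fin d)) (ψ : Fin N → ℝ) (x : EuclideanSpace ℝ (Fin d)) : ℝ :=
  min 0 (⨅ i, (‖x - y i‖ ^ 2 - ψ i))

lemma KD_eq (ρ : Measure (EuclideanSpace ℝ (Fin d))) (y : Fin N → E) (α ψ : Fin N → ℝ) :
    KD ρ y α ψ = (∫ x, gf y ψ x ∂ρ) + ∑ i, α i * ψ i := rfl


lemma gf_nonpos (y : Fin N → E) (ψ : Fin N → ℝ) (x : E) : gf y ψ x ≤ 0 := min_le_left _ _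

lemma bdd_range (f : Fin N → ℝ) : BddBelow (Set.range f) := (Set.finite_range f).bddBelow

lemma iInf_le_of_fin (f : Fin N → ℝ) (j : Fin N) : (⨅ i, f i) ≤ f j := ciInf_le (bdd_range f) j

lemma gf_le (y : Fin N → E) (ψ : Fin N → ℝ) (x : E) (j : Fin N) :
    gf y ψ x ≤ ‖x - y j‖ ^ 2 - ψ j :=
  le_trans (min_le_right _ _) (iInf_le_of_fin _ j)

lemma gf_lipschitz (y : Fin N → E) (ψ₁ ψ₂ : Fin N → ℝ) (x : E) :
    gf y ψ₁ x - gf y ψ₂ x ≤ dist ψ₁ ψ₂ := by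
  by_cases hN : N = 0
  · subst hN
    have : ψ₁ = ψ₂ := Subsingleton.elim _ _
    simp [this, dist_nonneg]
  have hNe : Nonempty (Fin N) := ⟨⟨0, Nat.pos_of_ne_zero hN⟩⟩
  have hD : (0:ℝ) ≤ dist ψ₁ ψ₂ := dist_nonneg
  have key : (⨅ i, (‖x - y i‖ ^ 2 - ψ₁ i)) ≤ (⨅ i, (‖x - y i‖ ^ 2 - ψ₂ i)) + dist ψ₁ ψ₂ := by
    rw [← sub_le_iff_le_add]
    refine le_ciInf fun j => ?_
    have h1 : (⨅ i, (‖x - y i‖ ^ 2 - ψ₁ i)) ≤ ‖x - y j‖ ^ 2 - ψ₁ j := iInf_le_of_fin _ j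
    have h2 : ψ₂ j - ψ₁ j ≤ dist ψ₁ ψ₂ := by
      have := dist_le_pi_dist ψ₁ ψ₂ j
      rw [Real.dist_eq] at this
      cases abs_cases (ψ₁ j - ψ₂ j) <;> linarith
    linarith
  unfold gf
  rcases le_total (⨅ i, (‖x - y i‖ ^ 2 - ψ₂ i)) 0 with h | h
  · rw [min_eq_right h]
    have h1 : min 0 (⨅ i, (‖x - y i‖ ^ 2 - ψ₁ i)) ≤ ⨅ i, (‖x - y i‖ ^ 2 - ψ₁ i) := min_le_right _ _
    linarith
  · rw [min_eq_left h]
    have : min 0 (⨅ i, (‖x - y i‖ ^ 2 - ψ₁ i)) ≤ 0 := min_le_left _ _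
    linarith

lemma gf_dist (y : Fin N → E) (ψ₁ ψ₂ : Fin N → ℝ) (x : E) :
    |gf y ψ₁ x - gf y ψ₂ x| ≤ dist ψ₁ ψ₂ := by
  rw [abs_sub_le_iff]
  refine ⟨gf_lipschitz y ψ₁ ψ₂ x, ?_⟩
  rw [dist_comm]; exact gf_lipschitz y ψ₂ ψ₁ x

lemma gf_zero (y : Fin N → E) (x : E) : gf y 0 x = 0 := by
  by_cases hN : N = 0
  · subst hN; simp [gf, Real.iInf_of_isEmpty]
  have hNe : Nonempty (Fin N) := ⟨⟨0, Nat.pos_of_ne_zero hN⟩⟩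
  have h0 : (0:ℝ) ≤ ⨅ i, (‖x - y i‖ ^ 2 - (0:Fin N → ℝ) i) := by
    refine le_ciInf fun j => ?_
    simp only [Pi.zero_apply, sub_zero]
    positivity
  simp only [gf]
  rw [min_eq_left h0]

lemma gf_abs_le (y : Fin N → E) (ψ : Fin N → ℝ) (x : E) : |gf y ψ x| ≤ ‖ψ‖ := by
  have := gf_dist y ψ 0 x
  rwa [gf_zero, sub_zero, dist_zero_right] at this

lemma gf_continuous (y : Fin N → E) (ψ : Fin N → ℝ) : Continuous (gf y ψ) := by
  by_cases hN : N = 0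
  · subst hN
    have : gf y ψ = fun _ => (0:ℝ) := by
      funext x; simp [gf, Real.iInf_of_isEmpty]
    rw [this]; exact continuous_const
  haveI hNe : Nonempty (Fin N) := ⟨⟨0, Nat.pos_of_ne_zero hN⟩⟩
  have h : ∀ i : Fin N, Continuous fun x : E => ‖x - y i‖ ^ 2 - ψ i := fun i =>
    (((continuous_id.sub continuous_const).norm).pow 2).sub continuous_const
  have hc : Continuous fun x : E => ⨅ i, (‖x - y i‖ ^ 2 - ψ i) := by
    have heq : (fun x : E => ⨅ i, (‖x - y i‖ ^ 2 - ψ i)) =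
        fun x : E => Finset.univ.inf' Finset.univ_nonempty (fun i => ‖x - y i‖ ^ 2 - ψ i) := by
      funext x
      rw [Finset.inf'_univ_eq_ciInf]
    rw [heq]
    exact Continuous.finset_inf'_apply Finset.univ_nonempty fun i _ => h i
  exact continuous_const.min hc

lemma gf_integrable (y : Fin N → E) (ψ : Fin N → ℝ) (ρ : Measure E) [IsFiniteMeasure ρ] :
    Integrable (gf y ψ) ρ := by
  refine Integrable.mono' (integrable_const ‖ψ‖) (gf_continuous y ψ).aestronglyMeasurable ?_
  exact ae_of_all _ fun x => by simpa [Real.norm_eq_abs] using gf_abs_le y ψ x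


lemma isClosed_LagD (y : Fin N → E) (ψ : Fin N → ℝ) (i : Fin N) : IsClosed (LagD y ψ i) := by
  have : LagD y ψ i = ⋂ j, {x : E | ‖x - y i‖ ^ 2 - ψ i ≤ ‖x - y j‖ ^ 2 - ψ j} := by
    ext x; simp [LagD]
  rw [this]
  refine isClosed_iInter fun j => ?_
  exact isClosed_le
    ((((continuous_id.sub continuous_const).norm).pow 2).sub continuous_const)
    ((((continuous_id.sub continuous_const).norm).pow 2).sub continuous_const)

lemma isClosed_RLagD (y : Fin N → E) (ψ : Fin N → ℝ) (i : Fin N) : IsClosed (RLagD y ψ i) := by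
  refine (isClosed_LagD y ψ i).inter ?_
  exact isClosed_le ((((continuous_id.sub continuous_const).norm).pow 2)) continuous_const

lemma measurableSet_RLagD (y : Fin N → E) (ψ : Fin N → ℝ) (i : Fin N) :
    MeasurableSet (RLagD y ψ i) := (isClosed_RLagD y ψ i).measurableSet

/-- A "bisector-type" set is Lebesgue-null. -/
lemma volume_bisector_null {v : E} (hv : v ≠ 0) (c : ℝ) :
    volume {x : E | (inner ℝ x v : ℝ) = c} = 0 := by
  set W : Submodule ℝ E := LinearMap.ker (innerSL ℝ v).toLinearMap with hW
  have hx₀ : (inner ℝ ((c / ‖v‖ ^ 2) • v) v : ℝ) = c := by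
    rw [real_inner_smul_left, real_inner_self_eq_norm_sq]
    have : ‖v‖ ^ 2 ≠ 0 := pow_ne_zero 2 (norm_ne_zero_iff.mpr hv)
    field_simp
  set A : AffineSubspace ℝ E := AffineSubspace.mk' ((c / ‖v‖ ^ 2) • v) W with hA
  have hset : {x : E | (inner ℝ x v : ℝ) = c} = (A : Set E) := by
    ext x
    simp only [Set.mem_setOf_eq, hA, SetLike.mem_coe, AffineSubspace.mem_mk']
    have : x -ᵥ (c / ‖v‖ ^ 2) • v ∈ W ↔ (inner ℝ v (x - (c / ‖v‖ ^ 2) • v) : ℝ) = 0 := by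
      simp [hW, LinearMap.mem_ker]
    rw [this, inner_sub_right, real_inner_comm]
    constructor
    · intro h; rw [h, real_inner_comm, hx₀]; ring
    · intro h
      have := hx₀
      rw [real_inner_comm] at this
      linarith
  have hAtop : A ≠ ⊤ := by
    intro h
    have hdir : A.direction = ⊤ := by rw [h, AffineSubspace.direction_top]
    rw [hA, AffineSubspace.direction_mk'] at hdir
    have : (innerSL ℝ v).toLinearMap = 0 := LinearMap.ker_eq_top.mp hdir
    have hvv : (inner ℝ v v : ℝ) = 0 := by
      have := LinearMap.congr_fun this v
      simpa using this
    exact hv (inner_self_eq_zero.mp hvv)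
  rw [hset]
  exact Measure.addHaar_affineSubspace volume A hAtop

lemma volume_eqcell_null (y : Fin N → E) (hy : Function.Injective y) (ψ : Fin N → ℝ)
    {i j : Fin N} (hij : i ≠ j) :
    volume {x : E | ‖x - y i‖ ^ 2 - ψ i = ‖x - y j‖ ^ 2 - ψ j} = 0 := by
  have hv : y j - y i ≠ 0 := sub_ne_zero.mpr fun h => hij (hy h).symm
  have hsub : {x : E | ‖x - y i‖ ^ 2 - ψ i = ‖x - y j‖ ^ 2 - ψ j} ⊆
      {x : E | (inner ℝ x (y j - y i) : ℝ) = (ψ i - ψ j + ‖y j‖ ^ 2 - ‖y i‖ ^ 2) / 2} := by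
    intro x hx
    simp only [Set.mem_setOf_eq] at hx ⊢
    rw [norm_sub_sq_real, norm_sub_sq_real] at hx
    rw [inner_sub_right]
    linarith
  exact measure_mono_null hsub (volume_bisector_null hv _)

lemma volume_sphere_null (hd : 1 ≤ d) (y₀ : E) (r : ℝ) :
    volume {x : E | ‖x - y₀‖ ^ 2 = r} = 0 := by
  haveI : Nonempty (Fin d) := ⟨⟨0, hd⟩⟩
  haveI : Nontrivial E := by infer_instance
  rcases lt_or_ge r 0 with hr | hr
  · have : {x : E | ‖x - y₀‖ ^ 2 = r} = ∅ := by
      ext x; simp only [Set.mem_setOf_eq, Set.mem_empty_iff_false, iff_false]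
      intro h; nlinarith [sq_nonneg (‖x - y₀‖)]
    simp [this]
  · have hsub : {x : E | ‖x - y₀‖ ^ 2 = r} ⊆ Metric.sphere y₀ (Real.sqrt r) := by
      intro x hx
      simp only [Set.mem_setOf_eq] at hx
      simp only [Metric.mem_sphere, dist_eq_norm]
      rw [← hx, Real.sqrt_sq (norm_nonneg _)]
    exact measure_mono_null hsub (Measure.addHaar_sphere volume y₀ _)
section C3
lemma gf_eq_of_mem_RLagD {y : Fin N → E} {ψ : Fin N → ℝ} {i : Fin N}
    {x : E} (hx : x ∈ RLagD y ψ i) : gf y ψ x = ‖x - y i‖ ^ 2 - ψ i := by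
  haveI : Nonempty (Fin N) := ⟨i⟩
  obtain ⟨hlag, hle⟩ := hx
  have h1 : (⨅ j, (‖x - y j‖ ^ 2 - ψ j)) = ‖x - y i‖ ^ 2 - ψ i := by
    refine le_antisymm (iInf_le_of_fin _ i) (le_ciInf fun j => hlag j)
  have h2 : ‖x - y i‖ ^ 2 - ψ i ≤ 0 := by simpa [sub_nonpos] using hle
  rw [gf, h1, min_eq_right h2]

lemma exists_mem_RLagD_of_gf_neg (hN : 0 < N) {y : Fin N → E} {ψ : Fin N → ℝ}
    {x : E} (hx : gf y ψ x < 0) : ∃ i, x ∈ RLagD y ψ i := by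
  haveI : Nonempty (Fin N) := ⟨⟨0, hN⟩⟩
  obtain ⟨i, hi⟩ := Finite.exists_min (α := Fin N) fun j => ‖x - y j‖ ^ 2 - ψ j
  have hinf : (⨅ j, (‖x - y j‖ ^ 2 - ψ j)) = ‖x - y i‖ ^ 2 - ψ i :=
    le_antisymm (iInf_le_of_fin _ i) (le_ciInf hi)
  have : min 0 (⨅ j, (‖x - y j‖ ^ 2 - ψ j)) < 0 := hx
  have hneg : ‖x - y i‖ ^ 2 - ψ i < 0 := by
    rw [← hinf]
    rcases lt_or_ge (⨅ j, (‖x - y j‖ ^ 2 - ψ j)) 0 with h | h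
    · exact h
    · rw [min_eq_left h] at this; linarith
  exact ⟨i, hi, by simp only [Set.mem_setOf_eq]; linarith⟩

lemma ae_cells_disjoint (ρ : Measure E) (hac : ρ ≪ volume)
    {y : Fin N → E} (hy : Function.Injective y) (ψ : Fin N → ℝ) :
    ∀ᵐ x ∂ρ, ∀ i j : Fin N, i ≠ j → ¬(x ∈ RLagD y ψ i ∧ x ∈ RLagD y ψ j) := by
  rw [ae_all_iff]
  intro i
  rw [ae_all_iff]
  intro j
  by_cases hij : i = j
  · filter_upwards with x; intro h; exact absurd hij h
  · have hnull : ρ (RLagD y ψ i ∩ RLagD y ψ j) = 0 := by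
      refine measure_mono_null ?_ (hac (volume_eqcell_null y hy ψ hij))
      rintro x ⟨⟨hli, -⟩, ⟨hlj, -⟩⟩
      exact le_antisymm (hli j) (hlj i)
    have := (measure_eq_zero_iff_ae_notMem (μ := ρ)).mp hnull
    filter_upwards [this] with x hx _ hmem
    exact hx ⟨hmem.1, hmem.2⟩

lemma supergrad (hN : 0 < N) (ρ : Measure E) [IsProbabilityMeasure ρ]
    (hac : ρ ≪ volume) {y : Fin N → E} (hy : Function.Injective y)
    (α : Fin N → ℝ) (ψ ψ' : Fin N → ℝ) :
    KD ρ y α ψ' - KD ρ y α ψ ≤ ∑ i, (α i - (ρ (RLagD y ψ i)).toReal) * (ψ' i - ψ i) := by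
  set h : E → ℝ := fun x => ∑ i, Set.indicator (RLagD y ψ i) (fun _ => -(ψ' i - ψ i)) x with hh
  have hint_h : Integrable h ρ := by
    refine integrable_finset_sum _ fun i _ => ?_
    exact (integrable_const _).indicator (measurableSet_RLagD y ψ i)
  have hae : ∀ᵐ x ∂ρ, gf y ψ' x - gf y ψ x ≤ h x := by
    filter_upwards [ae_cells_disjoint ρ hac hy ψ] with x hx
    by_cases hcase : ∃ i, x ∈ RLagD y ψ i
    · obtain ⟨i, hi⟩ := hcase
      have hsum : h x = -(ψ' i - ψ i) := by
        rw [hh]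
        simp only
        rw [Finset.sum_eq_single i]
        · rw [Set.indicator_of_mem hi]
        · intro j _ hji
          rw [Set.indicator_of_notMem]
          intro hj
          exact hx j i hji ⟨hj, hi⟩
        · intro habs; exact absurd (Finset.mem_univ i) habs
      rw [hsum]
      have h1 := gf_eq_of_mem_RLagD hi
      have h2 := gf_le y ψ' x i
      linarith
    · have hsum : h x = 0 := by
        rw [hh]
        simp only
        refine Finset.sum_eq_zero fun j _ => ?_
        rw [Set.indicator_of_notMem (fun hj => hcase ⟨j, hj⟩)]
      rw [hsum]
      have h1 : gf y ψ x = 0 := by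
        rcases lt_or_ge (gf y ψ x) 0 with hlt | hge
        · exact absurd (exists_mem_RLagD_of_gf_neg hN hlt) hcase
        · exact le_antisymm (gf_nonpos y ψ x) hge
      have h2 := gf_nonpos y ψ' x
      linarith
  have hint1 := gf_integrable y ψ' ρ
  have hint2 := gf_integrable y ψ ρ
  have hle : (∫ x, gf y ψ' x ∂ρ) - (∫ x, gf y ψ x ∂ρ) ≤ ∫ x, h x ∂ρ := by
    rw [← integral_sub hint1 hint2]
    exact integral_mono_ae (hint1.sub hint2) hint_h hae
  have hinth : (∫ x, h x ∂ρ) = ∑ i, (ρ (RLagD y ψ i)).toReal * (-(ψ' i - ψ i)) := by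
    rw [hh]
    rw [integral_finset_sum _ fun i _ => (integrable_const _).indicator (measurableSet_RLagD y ψ i)]
    refine Finset.sum_congr rfl fun i _ => ?_
    rw [integral_indicator_const _ (measurableSet_RLagD y ψ i)]
    simp [mul_comm, Measure.real]
  rw [KD_eq, KD_eq]
  have : ∑ i, (α i - (ρ (RLagD y ψ i)).toReal) * (ψ' i - ψ i)
      = (∑ i, (ρ (RLagD y ψ i)).toReal * (-(ψ' i - ψ i))) + (∑ i, α i * ψ' i - ∑ i, α i * ψ i) := by
    rw [← Finset.sum_sub_distrib, ← Finset.sum_add_distrib]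
    refine Finset.sum_congr rfl fun i _ => by ring
  rw [this]
  linarith [hle.trans_eq hinth]
end C3
section C4

lemma KD_continuous (ρ : Measure E) [IsProbabilityMeasure ρ]
    (y : Fin N → E) (α : Fin N → ℝ) : Continuous (KD ρ y α) := by
  have hF : LipschitzWith 1 (fun ψ : Fin N → ℝ => ∫ x, gf y ψ x ∂ρ) := by
    refine LipschitzWith.of_dist_le_mul fun ψ₁ ψ₂ => ?_
    simp only [NNReal.coe_one, one_mul]
    rw [Real.dist_eq]
    have h1 := gf_integrable y ψ₁ ρ
    have h2 := gf_integrable y ψ₂ ρ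
    rw [← integral_sub h1 h2]
    calc |∫ x, (gf y ψ₁ x - gf y ψ₂ x) ∂ρ| ≤ ∫ x, |gf y ψ₁ x - gf y ψ₂ x| ∂ρ := by
          simpa [Real.norm_eq_abs] using
            norm_integral_le_integral_norm (fun x => gf y ψ₁ x - gf y ψ₂ x) (μ := ρ)
    _ ≤ ∫ _x, dist ψ₁ ψ₂ ∂ρ := by
          refine integral_mono ((h1.sub h2).abs) (integrable_const _) fun x => gf_dist y ψ₁ ψ₂ x
    _ = dist ψ₁ ψ₂ := by simp
  have hlin : Continuous fun ψ : Fin N → ℝ => ∑ i, α i * ψ i := by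
    exact continuous_finset_sum _ fun i _ => continuous_const.mul (continuous_apply i)
  exact hF.continuous.add hlin

lemma KD_large (hN : 0 < N) (ρ : Measure E) [IsProbabilityMeasure ρ]
    {Kc : Set E} (hKc : IsCompact Kc) (hρKc : ρ Kcᶜ = 0)
    (y : Fin N → E) (α : Fin N → ℝ) (hα : ∀ i, 0 < α i) :
    ∃ C : ℝ, 1 ≤ C ∧ ∀ ψ : Fin N → ℝ, (∀ i, 0 ≤ ψ i) → ∀ i0 : Fin N,
      (∀ j, ψ j ≤ ψ i0) → KD ρ y α ψ ≤ C - (1 - ∑ i, α i) * ψ i0 := by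
  haveI : Nonempty (Fin N) := ⟨⟨0, hN⟩⟩
  obtain ⟨r, hr⟩ := hKc.isBounded.subset_closedBall 0
  set B : ℝ := Finset.univ.sup' Finset.univ_nonempty (fun i => ‖y i‖) with hB
  have hBy : ∀ i, ‖y i‖ ≤ B := fun i => Finset.le_sup' (fun i => ‖y i‖) (Finset.mem_univ i)
  set C : ℝ := max 1 ((|r| + B) ^ 2) with hC
  refine ⟨C, le_max_left _ _, fun ψ hψ i0 hi0 => ?_⟩
  have hbound : ∀ x ∈ Kc, gf y ψ x ≤ C - ψ i0 := by
    intro x hx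
    have h1 : gf y ψ x ≤ ‖x - y i0‖ ^ 2 - ψ i0 := gf_le y ψ x i0
    have h2 : ‖x - y i0‖ ≤ |r| + B := by
      calc ‖x - y i0‖ ≤ ‖x‖ + ‖y i0‖ := norm_sub_le _ _
      _ ≤ |r| + B := by
        refine add_le_add ?_ (hBy i0)
        have := hr hx
        simpa [Metric.mem_closedBall, dist_zero_right] using this.trans (le_abs_self r)
    have h3 : ‖x - y i0‖ ^ 2 ≤ C := by
      have : ‖x - y i0‖ ^ 2 ≤ (|r| + B) ^ 2 := by
        have h0 : (0:ℝ) ≤ ‖x - y i0‖ := norm_nonneg _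
        nlinarith
      exact this.trans (le_max_right _ _)
    linarith
  have hae : ∀ᵐ x ∂ρ, gf y ψ x ≤ C - ψ i0 := by
    have : ∀ᵐ x ∂ρ, x ∈ Kc := by
      rw [ae_iff]
      have : {x : E | ¬ x ∈ Kc} = Kcᶜ := rfl
      rw [this, hρKc]
    filter_upwards [this] with x hx using hbound x hx
  have hint : (∫ x, gf y ψ x ∂ρ) ≤ C - ψ i0 := by
    calc (∫ x, gf y ψ x ∂ρ) ≤ ∫ _x, (C - ψ i0) ∂ρ :=
      integral_mono_ae (gf_integrable y ψ ρ) (integrable_const _) hae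
    _ = C - ψ i0 := by simp
  have hsum : ∑ i, α i * ψ i ≤ (∑ i, α i) * ψ i0 := by
    rw [Finset.sum_mul]
    refine Finset.sum_le_sum fun i _ => ?_
    exact mul_le_mul_of_nonneg_left (hi0 i) (hα i).le
  rw [KD_eq]
  nlinarith [hψ i0]
end C4
section C5

lemma exists_delta (hd : 1 ≤ d) (ρ : Measure E) [IsProbabilityMeasure ρ] (hac : ρ ≪ volume)
    (y : Fin N → E) (α : Fin N → ℝ) (hα : ∀ i, 0 < α i) :
    ∃ δ : ℝ, 0 < δ ∧ δ ≤ 1 ∧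
      ∀ i, (ρ (Metric.closedBall (y i) (Real.sqrt δ))).toReal ≤ α i / 3 := by
  have key : ∀ i : Fin N, ∀ᶠ n : ℕ in atTop,
      (ρ (Metric.closedBall (y i) (1 / (n + 1)))).toReal ≤ α i / 3 := by
    intro i
    have hanti : Antitone fun n : ℕ => Metric.closedBall (y i) (1 / (n + 1 : ℝ)) := by
      intro n m hnm
      refine Metric.closedBall_subset_closedBall ?_
      have h1 : (0:ℝ) < n + 1 := by positivity
      have h2 : (n:ℝ) + 1 ≤ (m:ℝ) + 1 := by exact_mod_cast Nat.succ_le_succ hnm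
      exact one_div_le_one_div_of_le h1 h2
    have hinter : (⋂ n : ℕ, Metric.closedBall (y i) (1 / (n + 1 : ℝ))) = {y i} := by
      ext x
      simp only [Set.mem_iInter, Metric.mem_closedBall, Set.mem_singleton_iff]
      constructor
      · intro h
        by_contra hne
        have hdist : 0 < dist x (y i) := dist_pos.mpr hne
        obtain ⟨n, hn⟩ := exists_nat_one_div_lt hdist
        exact absurd (h n) (by push_cast at hn ⊢; linarith)
      · intro h; subst h; intro n; simp; positivity
    have hnull : ρ {y i} = 0 := by
      refine hac (measure_mono_null ?_ (volume_sphere_null hd (y i) 0))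
      intro x hx
      simp only [Set.mem_singleton_iff] at hx
      subst hx
      simp
    have htend : Tendsto (fun n : ℕ => ρ (Metric.closedBall (y i) (1 / (n + 1 : ℝ)))) atTop
        (nhds 0) := by
      have := tendsto_measure_iInter_atTop
        (fun n => (measurableSet_closedBall).nullMeasurableSet) hanti
        ⟨0, measure_ne_top ρ _⟩
      rw [hinter, hnull] at this
      exact this
    have htendR : Tendsto (fun n : ℕ =>
        (ρ (Metric.closedBall (y i) (1 / (n + 1 : ℝ)))).toReal) atTop (nhds 0) := by
      have h0 : ((0:ENNReal)).toReal = 0 := rfl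
      rw [← h0]
      exact (ENNReal.tendsto_toReal (by simp)).comp htend
    have := htendR.eventually_le_const (show (0:ℝ) < α i / 3 by linarith [hα i])
    filter_upwards [this] with n hn using hn
  have hall : ∀ᶠ n : ℕ in atTop, ∀ i : Fin N,
      (ρ (Metric.closedBall (y i) (1 / (n + 1 : ℝ)))).toReal ≤ α i / 3 :=
    eventually_all.mpr key
  obtain ⟨n, hn⟩ := hall.exists
  refine ⟨(1 / (n + 1 : ℝ)) ^ 2, by positivity, ?_, ?_⟩
  · have h1 : (1 : ℝ) / (n + 1) ≤ 1 := by
      rw [div_le_one (by positivity)]; linarith [Nat.cast_nonneg (α := ℝ) n]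
    nlinarith [one_div_pos.mpr (show (0:ℝ) < n + 1 by positivity)]
  · intro i
    rw [Real.sqrt_sq (by positivity)]
    exact hn i
end C5
section C6

lemma push_positive (hd : 1 ≤ d) (hN : 0 < N) (ρ : Measure E) [IsProbabilityMeasure ρ]
    (hac : ρ ≪ volume) (y : Fin N → E) (α : Fin N → ℝ) (hα : ∀ i, 0 < α i)
    {R : ℝ} (hR : 1 ≤ R) {ψ : Fin N → ℝ} (hψmem : ψ ∈ Set.Icc (0 : Fin N → ℝ) (fun _ => R))
    (hmax : IsMaxOn (KD ρ y α) (Set.Icc (0 : Fin N → ℝ) (fun _ => R)) ψ) :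
    ∀ i, 0 < ψ i := by
  obtain ⟨δ, hδ0, hδ1, hδ⟩ := exists_delta hd ρ hac y α hα
  obtain ⟨hψ0, hψR⟩ := hψmem
  rw [Pi.le_def] at hψ0 hψR
  simp only [Pi.zero_apply] at hψ0
  -- the modified potential
  set ψ' : Fin N → ℝ := fun i => if ψ i ≤ δ / 2 then δ else ψ i with hψ'def
  set T : Finset (Fin N) := Finset.univ.filter (fun i => ψ i ≤ δ / 2) with hT
  by_contra hcon
  push_neg at hcon
  obtain ⟨i₀, hi₀⟩ := hcon
  have hi₀T : i₀ ∈ T := by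
    simp only [hT, Finset.mem_filter, Finset.mem_univ, true_and]
    linarith [le_antisymm hi₀ (hψ0 i₀)]
  -- ψ' is in the box
  have hψ'mem : ψ' ∈ Set.Icc (0 : Fin N → ℝ) (fun _ => R) := by
    constructor <;> rw [Pi.le_def] <;> intro i <;> simp only [hψ'def, Pi.zero_apply]
    · split <;> [linarith; exact hψ0 i]
    · split <;> [linarith; exact hψR i]
  -- distance bound
  have hdist : ∀ i, |ψ' i - ψ i| ≤ δ := by
    intro i
    simp only [hψ'def]
    split
    · next h => rw [abs_of_nonneg (by linarith [hψ0 i])]; linarith [hψ0 i]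
    · simp [hδ0.le]
  have hdistp : dist ψ' ψ ≤ δ := by
    rw [dist_pi_le_iff hδ0.le]
    intro i
    rw [Real.dist_eq]
    exact hdist i
  -- bad set
  set A : Set E := {x | gf y ψ' x < gf y ψ x} with hA
  have hAopen : IsOpen A := isOpen_lt (gf_continuous y ψ') (gf_continuous y ψ)
  have hAsub : A ⊆ ⋃ i ∈ T, Metric.closedBall (y i) (Real.sqrt δ) := by
    intro x hx
    have hxA : gf y ψ' x < gf y ψ x := hx
    have hneg : gf y ψ' x < 0 := lt_of_lt_of_le hxA (gf_nonpos y ψ x)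
    obtain ⟨i, hi⟩ := exists_mem_RLagD_of_gf_neg hN hneg
    have hgf' : gf y ψ' x = ‖x - y i‖ ^ 2 - ψ' i := gf_eq_of_mem_RLagD hi
    have hne : ψ' i ≠ ψ i := by
      intro h
      have : gf y ψ x ≤ ‖x - y i‖ ^ 2 - ψ i := gf_le y ψ x i
      rw [← h, ← hgf'] at this
      linarith
    have hiT : i ∈ T := by
      simp only [hT, Finset.mem_filter, Finset.mem_univ, true_and]
      by_contra h
      exact hne (by simp [hψ'def, h])
    have hψ'i : ψ' i = δ := by
      simp only [hψ'def]
      rw [if_pos (by simpa [hT, Finset.mem_filter] using hiT)]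
    have hxball : ‖x - y i‖ ^ 2 < δ := by
      rw [hgf', hψ'i] at hneg; linarith
    refine Set.mem_biUnion hiT ?_
    rw [Metric.mem_closedBall, dist_eq_norm]
    calc ‖x - y i‖ = Real.sqrt (‖x - y i‖ ^ 2) := (Real.sqrt_sq (norm_nonneg _)).symm
    _ ≤ Real.sqrt δ := Real.sqrt_le_sqrt hxball.le
  -- pointwise bound
  have hpt : ∀ x, gf y ψ x - gf y ψ' x ≤ Set.indicator A (fun _ => δ) x := by
    intro x
    by_cases hx : x ∈ A
    · rw [Set.indicator_of_mem hx]
      have := gf_lipschitz y ψ ψ' x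
      rw [dist_comm] at this
      linarith [this.trans hdistp]
    · rw [Set.indicator_of_notMem hx]
      have : ¬ (gf y ψ' x < gf y ψ x) := hx
      linarith [not_lt.mp this]
  -- integral bound
  have hmeasA : (ρ A).toReal ≤ ∑ i ∈ T, (α i / 3) := by
    have h1 : ρ A ≤ ∑ i ∈ T, ρ (Metric.closedBall (y i) (Real.sqrt δ)) :=
      (measure_mono hAsub).trans (measure_biUnion_finset_le T _)
    have h2 : (ρ A).toReal ≤ (∑ i ∈ T, ρ (Metric.closedBall (y i) (Real.sqrt δ))).toReal := by
      refine ENNReal.toReal_mono ?_ h1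
      exact (ENNReal.sum_ne_top).mpr fun i _ => measure_ne_top ρ _
    rw [ENNReal.toReal_sum (fun i _ => measure_ne_top ρ _)] at h2
    exact h2.trans (Finset.sum_le_sum fun i _ => hδ i)
  have hintbound : (∫ x, gf y ψ x ∂ρ) - (∫ x, gf y ψ' x ∂ρ) ≤ δ * (ρ A).toReal := by
    have h1 := gf_integrable y ψ ρ (d := d)
    have h2 := gf_integrable y ψ' ρ (d := d)
    have hindint : Integrable (Set.indicator A fun _ => δ) ρ :=
      (integrable_const δ).indicator hAopen.measurableSet
    calc (∫ x, gf y ψ x ∂ρ) - (∫ x, gf y ψ' x ∂ρ) = ∫ x, (gf y ψ x - gf y ψ' x) ∂ρ :=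
          (integral_sub h1 h2).symm
    _ ≤ ∫ x, Set.indicator A (fun _ => δ) x ∂ρ :=
          integral_mono (h1.sub h2) hindint hpt
    _ = δ * (ρ A).toReal := by
          rw [integral_indicator_const _ hAopen.measurableSet]; simp [mul_comm, Measure.real]
  -- gain in linear term
  have hgain : ∑ i, α i * ψ' i - ∑ i, α i * ψ i = ∑ i ∈ T, α i * (δ - ψ i) := by
    rw [← Finset.sum_sub_distrib]
    rw [← Finset.sum_filter_add_sum_filter_not Finset.univ (fun i => ψ i ≤ δ / 2)]
    have hz : ∑ i ∈ Finset.univ.filter (fun i => ¬ ψ i ≤ δ / 2), (α i * ψ' i - α i * ψ i) = 0 := by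
      refine Finset.sum_eq_zero fun i hi => ?_
      simp only [Finset.mem_filter] at hi
      simp [hψ'def, hi.2]
    rw [hz, add_zero, hT]
    refine Finset.sum_congr rfl fun i hi => ?_
    simp only [Finset.mem_filter] at hi
    rw [hψ'def]
    simp only [if_pos hi.2]
    ring
  -- conclusion
  have hKdiff : KD ρ y α ψ' - KD ρ y α ψ
      = ((∫ x, gf y ψ' x ∂ρ) - (∫ x, gf y ψ x ∂ρ)) + (∑ i, α i * ψ' i - ∑ i, α i * ψ i) := by
    rw [KD_eq, KD_eq]; ring
  have hpos : 0 < KD ρ y α ψ' - KD ρ y α ψ := by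
    rw [hKdiff, hgain]
    have hlow : ∑ i ∈ T, α i * (δ - ψ i) ≥ ∑ i ∈ T, α i * (δ / 2) := by
      refine Finset.sum_le_sum fun i hi => ?_
      simp only [hT, Finset.mem_filter] at hi
      exact mul_le_mul_of_nonneg_left (by linarith [hi.2]) (hα i).le
    have hup : (∫ x, gf y ψ x ∂ρ) - (∫ x, gf y ψ' x ∂ρ) ≤ δ * ∑ i ∈ T, (α i / 3) :=
      hintbound.trans (mul_le_mul_of_nonneg_left hmeasA hδ0.le)
    have hsumpos : 0 < ∑ i ∈ T, α i := Finset.sum_pos (fun i _ => hα i) ⟨i₀, hi₀T⟩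
    have e1 : ∑ i ∈ T, α i * (δ / 2) = (δ / 2) * ∑ i ∈ T, α i := by
      rw [Finset.mul_sum]; exact Finset.sum_congr rfl fun i _ => mul_comm _ _
    have e2 : δ * ∑ i ∈ T, (α i / 3) = (δ / 3) * ∑ i ∈ T, α i := by
      rw [Finset.mul_sum, Finset.mul_sum]
      exact Finset.sum_congr rfl fun i _ => by ring
    rw [e1] at hlow
    rw [e2] at hup
    nlinarith
  have := hmax hψ'mem
  simp only [Set.mem_setOf_eq] at this
  linarith
end C6
section C7

lemma exists_max (hd : 1 ≤ d) (hN : 0 < N) (ρ : Measure E) [IsProbabilityMeasure ρ]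
    (hac : ρ ≪ volume) {Kc : Set E} (hKc : IsCompact Kc) (hρKc : ρ Kcᶜ = 0)
    (y : Fin N → E) (α : Fin N → ℝ) (hα : ∀ i, 0 < α i) (hαs : ∑ i, α i < 1) :
    ∃ ψ : Fin N → ℝ, (∀ i, 0 < ψ i) ∧
      IsMaxOn (KD ρ y α) {ψ' : Fin N → ℝ | ∀ i, 0 < ψ' i} ψ := by
  haveI : Nonempty (Fin N) := ⟨⟨0, hN⟩⟩
  obtain ⟨C, hC1, hC⟩ := KD_large hN ρ hKc hρKc y α hα
  set s : ℝ := ∑ i, α i with hs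
  set B0 : ℝ := KD ρ y α (fun _ => 1) with hB0
  set R : ℝ := max C ((C - B0) / (1 - s) + 1) with hR
  have hRC : C ≤ R := le_max_left _ _
  have hR1 : 1 ≤ R := hC1.trans hRC
  have hRB : C - (1 - s) * R < B0 := by
    have h1 : (C - B0) / (1 - s) + 1 ≤ R := le_max_right _ _
    have h2 : 0 < 1 - s := by linarith
    have h3 : (C - B0) / (1 - s) < R := by linarith
    have h4 : C - B0 < (1 - s) * R := by
      rw [div_lt_iff₀ h2] at h3; linarith [h3]
    linarith
  set box : Set (Fin N → ℝ) := Set.Icc (0 : Fin N → ℝ) (fun _ => R) with hbox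
  have hcpt : IsCompact box := isCompact_Icc
  have hne : box.Nonempty := by
    refine ⟨fun _ => 1, ?_, ?_⟩ <;> rw [Pi.le_def] <;> intro i
    · simp
    · exact hR1
  obtain ⟨ψ, hψbox, hψmax⟩ := hcpt.exists_isMaxOn hne (KD_continuous ρ y α).continuousOn
  have hψpos : ∀ i, 0 < ψ i := push_positive hd hN ρ hac y α hα hR1 hψbox hψmax
  refine ⟨ψ, hψpos, ?_⟩
  intro ψ' hψ'
  simp only [Set.mem_setOf_eq] at hψ' ⊢
  by_cases hcase : ∀ i, ψ' i ≤ R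
  · have : ψ' ∈ box := by
      refine ⟨?_, ?_⟩ <;> rw [Pi.le_def] <;> intro i
      · exact (hψ' i).le
      · exact hcase i
    exact hψmax this
  · push_neg at hcase
    obtain ⟨j, hj⟩ := hcase
    obtain ⟨i0, hi0⟩ := Finite.exists_max (α := Fin N) ψ'
    have hi0R : R < ψ' i0 := hj.trans_le (hi0 j)
    have h1 : KD ρ y α ψ' ≤ C - (1 - s) * ψ' i0 :=
      hC ψ' (fun i => (hψ' i).le) i0 hi0
    have h2 : C - (1 - s) * ψ' i0 < C - (1 - s) * R := by
      have : 0 < 1 - s := by linarith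
      nlinarith
    have h4 : KD ρ y α (fun _ => 1) ≤ KD ρ y α ψ := by
      refine hψmax ?_
      refine ⟨?_, ?_⟩ <;> rw [Pi.le_def] <;> intro i
      · simp
      · exact hR1
    have h3 : B0 ≤ KD ρ y α ψ := h4
    linarith
end C7
section C8

lemma sum_single_update (α ρv : Fin N → ℝ) (ψ ψ' : Fin N → ℝ) (i : Fin N)
    (h : ∀ j, j ≠ i → ψ' j = ψ j) :
    ∑ j, (α j - ρv j) * (ψ j - ψ' j) = (α i - ρv i) * (ψ i - ψ' i) := by
  rw [Finset.sum_eq_single i]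
  · intro j _ hj; rw [h j hj]; ring
  · intro h; exact absurd (Finset.mem_univ i) h

lemma measure_RLag_ge (hN : 0 < N) (ρ : Measure E) [IsProbabilityMeasure ρ]
    (hac : ρ ≪ volume) {y : Fin N → E} (hy : Function.Injective y)
    (α : Fin N → ℝ) {ψ : Fin N → ℝ} (hψ : ∀ i, 0 < ψ i)
    (hmax : IsMaxOn (KD ρ y α) {ψ' : Fin N → ℝ | ∀ i, 0 < ψ' i} ψ) (i : Fin N) :
    α i ≤ (ρ (RLagD y ψ i)).toReal := by
  have key : ∀ t : ℝ, 0 < t →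
      α i ≤ (ρ (RLagD y (Function.update ψ i (ψ i + t)) i)).toReal := by
    intro t ht
    set ψ' : Fin N → ℝ := Function.update ψ i (ψ i + t) with hψ'
    have hψ'pos : ∀ j, 0 < ψ' j := by
      intro j
      by_cases h : j = i
      · subst h; rw [hψ', Function.update_self]; linarith [hψ j]
      · rw [hψ', Function.update_of_ne h]; exact hψ j
    have h1 := supergrad hN ρ hac hy α ψ' ψ
    have h2 : KD ρ y α ψ' ≤ KD ρ y α ψ := hmax (by simpa using hψ'pos)
    have hsum : ∑ j, (α j - (ρ (RLagD y ψ' j)).toReal) * (ψ j - ψ' j)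
        = (α i - (ρ (RLagD y ψ' i)).toReal) * (-t) := by
      rw [sum_single_update _ _ _ _ i fun j hj => Function.update_of_ne hj _ _]
      rw [hψ', Function.update_self]; ring_nf
    rw [hsum] at h1
    nlinarith
  -- limit along t = 1/(n+1)
  set S : ℕ → Set E := fun n => RLagD y (Function.update ψ i (ψ i + 1 / (n + 1 : ℝ))) i with hS
  have htpos : ∀ n : ℕ, (0:ℝ) < 1 / (n + 1 : ℝ) := fun n => by positivity
  have hanti : Antitone S := by
    intro n m hnm x hx
    obtain ⟨hlag, hle⟩ := hx
    have htle : 1 / (m + 1 : ℝ) ≤ 1 / (n + 1 : ℝ) := by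
      apply one_div_le_one_div_of_le (by positivity)
      exact_mod_cast Nat.succ_le_succ hnm
    constructor
    · intro j
      by_cases h : j = i
      · subst h; exact le_refl _
      · have := hlag j
        rw [Function.update_of_ne h] at this ⊢
        rw [Function.update_self] at this ⊢
        linarith
    · have := hle
      simp only [Set.mem_setOf_eq, Function.update_self] at this ⊢
      linarith
  have hinter : (⋂ n, S n) = RLagD y ψ i := by
    ext x
    simp only [Set.mem_iInter]
    constructor
    · intro h
      constructor
      · intro j
        by_cases hj : j = i
        · subst hj; exact le_refl _
        · by_contra hcon
          push_neg at hcon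
          obtain ⟨n, hn⟩ := exists_nat_one_div_lt
            (show (0:ℝ) < (‖x - y i‖ ^ 2 - ψ i) - (‖x - y j‖ ^ 2 - ψ j) by linarith)
          have := (h n).1 j
          rw [Function.update_of_ne hj, Function.update_self] at this
          push_cast at hn
          linarith
      · simp only [Set.mem_setOf_eq]
        by_contra hcon
        push_neg at hcon
        obtain ⟨n, hn⟩ := exists_nat_one_div_lt (show (0:ℝ) < ‖x - y i‖ ^ 2 - ψ i by linarith)
        have := (h n).2
        simp only [Set.mem_setOf_eq, Function.update_self] at this
        push_cast at hn
        linarith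
    · intro hx n
      obtain ⟨hlag, hle⟩ := hx
      constructor
      · intro j
        by_cases hj : j = i
        · subst hj; exact le_refl _
        · rw [Function.update_of_ne hj, Function.update_self]
          have := hlag j
          linarith [htpos n]
      · simp only [Set.mem_setOf_eq, Function.update_self]
        simp only [Set.mem_setOf_eq] at hle
        linarith [htpos n]
  have htend : Tendsto (fun n => ρ (S n)) atTop (nhds (ρ (RLagD y ψ i))) := by
    have := tendsto_measure_iInter_atTop
      (fun n => (isClosed_RLagD y _ i).measurableSet.nullMeasurableSet) hanti
      ⟨0, measure_ne_top ρ _⟩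
    rwa [hinter] at this
  have htendR : Tendsto (fun n => (ρ (S n)).toReal) atTop
      (nhds ((ρ (RLagD y ψ i)).toReal)) :=
    (ENNReal.tendsto_toReal (measure_ne_top ρ _)).comp htend
  exact ge_of_tendsto' htendR fun n => key _ (htpos n)

lemma measure_RLag_le (hd : 1 ≤ d) (hN : 0 < N) (ρ : Measure E) [IsProbabilityMeasure ρ]
    (hac : ρ ≪ volume) {y : Fin N → E} (hy : Function.Injective y)
    (α : Fin N → ℝ) {ψ : Fin N → ℝ} (hψ : ∀ i, 0 < ψ i)
    (hmax : IsMaxOn (KD ρ y α) {ψ' : Fin N → ℝ | ∀ i, 0 < ψ' i} ψ) (i : Fin N) :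
    (ρ (RLagD y ψ i)).toReal ≤ α i := by
  haveI : Nonempty (Fin N) := ⟨i⟩
  have key : ∀ t : ℝ, 0 < t → t < ψ i →
      (ρ (RLagD y (Function.update ψ i (ψ i - t)) i)).toReal ≤ α i := by
    intro t ht htψ
    set ψ' : Fin N → ℝ := Function.update ψ i (ψ i - t) with hψ'
    have hψ'pos : ∀ j, 0 < ψ' j := by
      intro j
      by_cases h : j = i
      · subst h; rw [hψ', Function.update_self]; linarith
      · rw [hψ', Function.update_of_ne h]; exact hψ j
    have h1 := supergrad hN ρ hac hy α ψ' ψ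
    have h2 : KD ρ y α ψ' ≤ KD ρ y α ψ := hmax (by simpa using hψ'pos)
    have hsum : ∑ j, (α j - (ρ (RLagD y ψ' j)).toReal) * (ψ j - ψ' j)
        = (α i - (ρ (RLagD y ψ' i)).toReal) * t := by
      rw [sum_single_update _ _ _ _ i fun j hj => Function.update_of_ne hj _ _]
      rw [hψ', Function.update_self]; ring_nf
    rw [hsum] at h1
    nlinarith
  -- the increasing family
  set S : ℕ → Set E := fun n => RLagD y (Function.update ψ i (ψ i - ψ i / (n + 2 : ℝ))) i with hS
  have htpos : ∀ n : ℕ, (0:ℝ) < ψ i / (n + 2 : ℝ) := fun n => div_pos (hψ i) (by positivity)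
  have htlt : ∀ n : ℕ, ψ i / (n + 2 : ℝ) < ψ i := by
    intro n
    rw [div_lt_iff₀ (by positivity)]
    nlinarith [hψ i, Nat.cast_nonneg (α := ℝ) n]
  have hmono : Monotone S := by
    intro n m hnm x hx
    obtain ⟨hlag, hle⟩ := hx
    have htle : ψ i / (m + 2 : ℝ) ≤ ψ i / (n + 2 : ℝ) := by
      apply div_le_div_of_nonneg_left (hψ i).le (by positivity)
      exact_mod_cast Nat.add_le_add_right hnm 2
    constructor
    · intro j
      by_cases h : j = i
      · subst h; exact le_refl _
      · have := hlag j
        rw [Function.update_of_ne h] at this ⊢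
        rw [Function.update_self] at this ⊢
        linarith
    · simp only [Set.mem_setOf_eq, Function.update_self] at hle ⊢
      linarith
  -- bad set
  set Bad : Set E := {x : E | ‖x - y i‖ ^ 2 = ψ i} ∪
      ⋃ j : Fin N, {x : E | j ≠ i ∧ ‖x - y i‖ ^ 2 - ψ i = ‖x - y j‖ ^ 2 - ψ j} with hBad
  have hBadnull : ρ Bad = 0 := by
    rw [hBad]
    refine measure_union_null (hac (volume_sphere_null hd (y i) (ψ i))) ?_
    refine measure_iUnion_null fun j => ?_
    by_cases hj : j = i
    · subst hj
      have : {x : E | j ≠ j ∧ ‖x - y j‖ ^ 2 - ψ j = ‖x - y j‖ ^ 2 - ψ j} = ∅ := by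
        ext x; simp
      rw [this]
      exact measure_empty
    · refine hac (measure_mono_null ?_ (volume_eqcell_null y hy ψ (Ne.symm hj)))
      intro x hx
      exact hx.2
  -- covering
  have hcover : RLagD y ψ i ⊆ (⋃ n, S n) ∪ Bad := by
    intro x hx
    by_cases hbad : x ∈ Bad
    · exact Or.inr hbad
    refine Or.inl ?_
    obtain ⟨hlag, hle⟩ := hx
    simp only [Set.mem_setOf_eq] at hle
    rw [hBad] at hbad
    simp only [Set.mem_union, Set.mem_iUnion, Set.mem_setOf_eq, not_or, not_exists] at hbad
    obtain ⟨hbad1, hbad2⟩ := hbad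
    have hstrict1 : ‖x - y i‖ ^ 2 < ψ i := lt_of_le_of_ne hle hbad1
    have hstrict2 : ∀ j, j ≠ i → ‖x - y i‖ ^ 2 - ψ i < ‖x - y j‖ ^ 2 - ψ j := by
      intro j hj
      refine lt_of_le_of_ne (hlag j) ?_
      intro h
      exact hbad2 j ⟨hj, h⟩
    -- margin
    set G : Fin N → ℝ := fun j => if j = i then ψ i - ‖x - y i‖ ^ 2
      else (‖x - y j‖ ^ 2 - ψ j) - (‖x - y i‖ ^ 2 - ψ i) with hG
    have hGpos : ∀ j, 0 < G j := by
      intro j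
      by_cases h : j = i
      · simp only [hG, if_pos h]; subst h; linarith
      · simp only [hG, if_neg h]; linarith [hstrict2 j h]
    set m : ℝ := Finset.univ.inf' Finset.univ_nonempty G with hm
    have hmpos : 0 < m := by
      rw [hm, Finset.lt_inf'_iff]
      exact fun j _ => hGpos j
    have hmle : ∀ j, m ≤ G j := fun j => Finset.inf'_le G (Finset.mem_univ j)
    obtain ⟨n, hn⟩ := exists_nat_gt (ψ i / m)
    have htn : ψ i / (n + 2 : ℝ) < m := by
      rw [div_lt_iff₀ (by positivity)]
      rw [div_lt_iff₀ hmpos] at hn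
      nlinarith [hmpos]
    refine Set.mem_iUnion.mpr ⟨n, ?_, ?_⟩
    · intro j
      by_cases h : j = i
      · subst h; exact le_refl _
      · rw [Function.update_of_ne h, Function.update_self]
        have := hmle j
        simp only [hG, if_neg h] at this
        linarith [htn]
    · simp only [Set.mem_setOf_eq, Function.update_self]
      have := hmle i
      simp only [hG, if_pos] at this
      linarith [htn]
  -- conclude
  have hsub : ∀ n, S n ⊆ RLagD y ψ i := by
    intro n x hx
    obtain ⟨hlag, hle⟩ := hx
    constructor
    · intro j
      by_cases h : j = i
      · subst h; exact le_refl _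
      · have := hlag j
        rw [Function.update_of_ne h, Function.update_self] at this
        linarith [htpos n]
    · simp only [Set.mem_setOf_eq, Function.update_self] at hle ⊢
      linarith [htpos n]
  have htend : Tendsto (fun n => ρ (S n)) atTop (nhds (ρ (⋃ n, S n))) :=
    tendsto_measure_iUnion_atTop hmono
  have hmle2 : ρ (RLagD y ψ i) ≤ ρ (⋃ n, S n) := by
    calc ρ (RLagD y ψ i) ≤ ρ ((⋃ n, S n) ∪ Bad) := measure_mono hcover
    _ ≤ ρ (⋃ n, S n) + ρ Bad := measure_union_le _ _
    _ = ρ (⋃ n, S n) := by rw [hBadnull, add_zero]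
  have htendR : Tendsto (fun n => (ρ (S n)).toReal) atTop (nhds ((ρ (⋃ n, S n)).toReal)) :=
    (ENNReal.tendsto_toReal (measure_ne_top ρ _)).comp htend
  have hlim : (ρ (⋃ n, S n)).toReal ≤ α i :=
    le_of_tendsto' htendR fun n => key _ (htpos n) (htlt n)
  have : (ρ (RLagD y ψ i)).toReal ≤ (ρ (⋃ n, S n)).toReal :=
    ENNReal.toReal_mono (measure_ne_top ρ _) hmle2
  linarith
end C8
theorem stmt1 {d N : ℕ} (hd : 1 ≤ d) (hN : 0 < N)
    (ρ : Measure (EuclideanSpace ℝ (Fin d))) [IsProbabilityMeasure ρ]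
    (hac : ρ ≪ volume)
    (hcs : ∃ Kc : Set (EuclideanSpace ℝ (Fin d)), IsCompact Kc ∧ ρ Kcᶜ = 0)
    (y : Fin N → EuclideanSpace ℝ (Fin d)) (hy : Function.Injective y)
    (α : Fin N → ℝ) (hα : ∀ i, 0 < α i) (hαs : ∑ i, α i < 1) :
    (∃ ψ : Fin N → ℝ, (∀ i, 0 < ψ i) ∧
      IsMaxOn (KD ρ y α) {ψ' : Fin N → ℝ | ∀ i, 0 < ψ' i} ψ) ∧
    (∀ ψ : Fin N → ℝ, (∀ i, 0 < ψ i) →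
      (IsMaxOn (KD ρ y α) {ψ' : Fin N → ℝ | ∀ i, 0 < ψ' i} ψ ↔
        ∀ i, (ρ (RLagD y ψ i)).toReal = α i)) := by
  obtain ⟨Kc, hKc, hρKc⟩ := hcs
  constructor
  · exact exists_max hd hN ρ hac hKc hρKc y α hα hαs
  · intro ψ hψ
    constructor
    · intro hmax i
      exact le_antisymm (measure_RLag_le hd hN ρ hac hy α hψ hmax i)
        (measure_RLag_ge hN ρ hac hy α hψ hmax i)
    · intro h ψ' hψ'
      have h1 := supergrad hN ρ hac hy α ψ ψ'
      have hz : ∑ i, (α i - (ρ (RLagD y ψ i)).toReal) * (ψ' i - ψ i) = 0 :=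
        Finset.sum_eq_zero fun i _ => by rw [h i]; ring
      rw [hz] at h1
      simp only [Set.mem_setOf_eq]
      linarith
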